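/- Let p ∈ ℝ, q = 1−p, and let c_{jk} (j+k ≤ m) be complex numbers. For w ∈ S(ℝ²) let (A₁w)(s,t) = Σ_{j+k≤m} c_{jk} s^j (D_s^k w)(s,t) (the operator acting in the first variable, D_s = −i∂_s), and let B = Σ_{j+k≤m} c_{jk} (M₁ − qD₂)^j (M₂ + pD₁)^k. Then for every w ∈ S(ℝ²), B(Wig_p[w]) = Wig_p[A₁w]. -/

import Mathlib

open MeasureTheory SchwartzMap Complex Filter

noncomputable section




/-- Upgrade an `ℝ`-linear continuous map between Schwartz spaces to a `ℂ`-linear one,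
given that it commutes with scalar multiplication by complex numbers. -/
def complexifyCLM {E : Type*} [NormedAddCommGroup E] [NormedSpace ℝ E]
    (T : 𝓢(E, ℂ) →L[ℝ] 𝓢(E, ℂ)) (h : ∀ (c : ℂ) (f : 𝓢(E, ℂ)), T (c • f) = c • T f) :
    𝓢(E, ℂ) →L[ℂ] 𝓢(E, ℂ) :=
  { toFun := T
    map_add' := map_add T
    map_smul' := h
    cont := T.cont }

/-- Multiplication by a fixed function of temperate growth, as a continuous `ℂ`-linear map
on Schwartz space. -/
def mulCLM {E : Type*} [NormedAddCommGroup E] [NormedSpace ℝ E]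
    {g : E → ℂ} (hg : g.HasTemperateGrowth) : 𝓢(E, ℂ) →L[ℂ] 𝓢(E, ℂ) :=
  complexifyCLM (SchwartzMap.bilinLeftCLM (ContinuousLinearMap.mul ℝ ℂ) hg)
    (fun c f => by
      ext x
      show ((c • f) x) * g x = c • (f x * g x)
      simp [mul_assoc])

lemma mulCLM_apply {E : Type*} [NormedAddCommGroup E] [NormedSpace ℝ E]
    {g : E → ℂ} (hg : g.HasTemperateGrowth) (f : 𝓢(E, ℂ)) (x : E) :
    mulCLM hg f x = f x * g x := rfl

/-- A Schwartz function has temperate growth. -/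
lemma schwartz_hasTemperateGrowth {E : Type*} [NormedAddCommGroup E] [NormedSpace ℝ E]
    (f : 𝓢(E, ℂ)) : Function.HasTemperateGrowth ⇑f := by
  refine ⟨f.smooth', fun n => ⟨0, (SchwartzMap.seminorm ℝ 0 n) f, fun x => ?_⟩⟩
  simpa using f.norm_iteratedFDeriv_le_seminorm ℝ n x

lemma hasTemperateGrowth_coord1 : Function.HasTemperateGrowth (fun v : ℝ × ℝ => (v.1 : ℂ)) :=
  (Complex.ofRealCLM.comp (ContinuousLinearMap.fst ℝ ℝ ℝ)).hasTemperateGrowth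

lemma hasTemperateGrowth_coord2 : Function.HasTemperateGrowth (fun v : ℝ × ℝ => (v.2 : ℂ)) :=
  (Complex.ofRealCLM.comp (ContinuousLinearMap.snd ℝ ℝ ℝ)).hasTemperateGrowth

lemma hasTemperateGrowth_coord : Function.HasTemperateGrowth (fun x : ℝ => (x : ℂ)) :=
  Complex.ofRealCLM.hasTemperateGrowth

/-- Tempered distributions on `ℝ`. -/
abbrev TD1 : Type := 𝓢(ℝ, ℂ) →L[ℂ] ℂ

/-- Tempered distributions on `ℝ²`. -/
abbrev TD2 : Type := 𝓢(ℝ × ℝ, ℂ) →L[ℂ] ℂ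

/-- The canonical image of a Schwartz function in the tempered distributions,
`φ ↦ (ψ ↦ ∫ φ ψ)`. -/
def toDist1 (f : 𝓢(ℝ, ℂ)) : TD1 :=
  (SchwartzMap.integralCLM ℂ (volume : Measure ℝ)).comp (mulCLM (schwartz_hasTemperateGrowth f))

/-- A tempered distribution on `ℝ` "is" a Schwartz function. -/
def IsSchwartz1 (u : TD1) : Prop := ∃ f : 𝓢(ℝ, ℂ), ∀ ψ : 𝓢(ℝ, ℂ), u ψ = ∫ x : ℝ, f x * ψ x

/-- A tempered distribution on `ℝ²` "is" a Schwartz function. -/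
def IsSchwartz2 (u : TD2) : Prop :=
  ∃ f : 𝓢(ℝ × ℝ, ℂ), ∀ ψ : 𝓢(ℝ × ℝ, ℂ), u ψ = ∫ v : ℝ × ℝ, f v * ψ v

/-- An operator on tempered distributions is regular if `B u` Schwartz implies `u` Schwartz. -/
def IsRegular1 (B : TD1 → TD1) : Prop := ∀ u : TD1, IsSchwartz1 (B u) → IsSchwartz1 u

/-- An operator on tempered distributions on `ℝ²` is regular if `B u` Schwartz implies
`u` Schwartz. -/
def IsRegular2 (B : TD2 → TD2) : Prop := ∀ u : TD2, IsSchwartz2 (B u) → IsSchwartz2 u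

/-- Multiplication by `x`, on tempered distributions on `ℝ`: `⟨xu, φ⟩ = ⟨u, xφ⟩`. -/
def opM (u : TD1) : TD1 := u.comp (mulCLM hasTemperateGrowth_coord)

/-- `D = -i d/dx` on tempered distributions on `ℝ`: `⟨Du, φ⟩ = -⟨u, Dφ⟩`. -/
def opD (u : TD1) : TD1 := Complex.I • (u.comp (LineDeriv.lineDerivOpCLM ℂ 𝓢(ℝ, ℂ) (1 : ℝ)))

/-- Multiplication by the first coordinate on tempered distributions on `ℝ²`. -/
def opM1 (u : TD2) : TD2 := u.comp (mulCLM hasTemperateGrowth_coord1)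

/-- Multiplication by the second coordinate on tempered distributions on `ℝ²`. -/
def opM2 (u : TD2) : TD2 := u.comp (mulCLM hasTemperateGrowth_coord2)

/-- `D₁ = -i ∂ₓ` on tempered distributions on `ℝ²`. -/
def opD1 (u : TD2) : TD2 := Complex.I • (u.comp (LineDeriv.lineDerivOpCLM ℂ 𝓢(ℝ × ℝ, ℂ) ((1, 0) : ℝ × ℝ)))

/-- `D₂ = -i ∂_y` on tempered distributions on `ℝ²`. -/
def opD2 (u : TD2) : TD2 := Complex.I • (u.comp (LineDeriv.lineDerivOpCLM ℂ 𝓢(ℝ × ℝ, ℂ) ((0, 1) : ℝ × ℝ)))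

/-- The set of pairs `(j, k)` of exponents with `j + k ≤ m`. -/
def idxSet (m : ℕ) : Finset (ℕ × ℕ) :=
  (Finset.range (m + 1) ×ˢ Finset.range (m + 1)).filter (fun jk => jk.1 + jk.2 ≤ m)

/-- The polynomial symbol `a(x,ξ) = Σ_{j+k≤m} c_{jk} x^j ξ^k` as a function on `ℝ²`. -/
def symbolFun (m : ℕ) (c : ℕ → ℕ → ℂ) : ℝ × ℝ → ℂ :=
  fun v => ∑ jk ∈ idxSet m, c jk.1 jk.2 * (v.1 : ℂ) ^ jk.1 * (v.2 : ℂ) ^ jk.2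

/-- A polynomial function `a(x,ξ)` on `ℝ×ℝ` is hypo-elliptic if it does not vanish outside a
compact set and `(|∂ₓ a| + |∂_ξ a|)/|a| → 0` as `|x| + |ξ| → ∞`. -/
def IsHypoelliptic (a : ℝ × ℝ → ℂ) : Prop :=
  (∃ K : Set (ℝ × ℝ), IsCompact K ∧ ∀ v ∉ K, a v ≠ 0) ∧
    Tendsto (fun v : ℝ × ℝ => (‖fderiv ℝ a v (1, 0)‖ + ‖fderiv ℝ a v (0, 1)‖) / ‖a v‖)
      (comap (fun v : ℝ × ℝ => |v.1| + |v.2|) atTop) (nhds 0)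

/-- The differential operator `A = Σ_{j+k≤m} c_{jk} M^j D^k` on tempered distributions
on `ℝ`. -/
def opA (m : ℕ) (c : ℕ → ℕ → ℂ) (u : TD1) : TD1 :=
  ∑ jk ∈ idxSet m, c jk.1 jk.2 • opM^[jk.1] (opD^[jk.2] u)



-- function-level operators on ℝ → ℂ and ℝ × ℝ → ℂ

/-- `D = -i d/dx` acting on functions `ℝ → ℂ`. -/
def cD (u : ℝ → ℂ) : ℝ → ℂ := fun x => -Complex.I * deriv u x

/-- `D₁ = -i ∂ₓ` acting on functions `ℝ × ℝ → ℂ`. -/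
def cD1 (f : ℝ × ℝ → ℂ) : ℝ × ℝ → ℂ := fun v => -Complex.I * fderiv ℝ f v (1, 0)

/-- `D₂ = -i ∂_y` acting on functions `ℝ × ℝ → ℂ`. -/
def cD2 (f : ℝ × ℝ → ℂ) : ℝ × ℝ → ℂ := fun v => -Complex.I * fderiv ℝ f v (0, 1)

/-- The Wigner-like transform with parameter `p`:
`Wig_p[f](x,y) = (2π)^{-1/2} ∫ e^{-izy} f(x+(1-p)z, x-pz) dz`. -/
def Wig (p : ℝ) (f : ℝ × ℝ → ℂ) : ℝ × ℝ → ℂ := fun v =>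
  (((2 * Real.pi) ^ (-(1/2 : ℝ)) : ℝ) : ℂ) *
    ∫ z : ℝ, Complex.exp (-(Complex.I * z * v.2)) * f (v.1 + (1 - p) * z, v.1 - p * z)

-- Weyl-Wick transform on polynomials

open MvPolynomial in
/-- `∂ₓ` on complex polynomials in two variables, as an endomorphism. -/
def pdX : Module.End ℂ (MvPolynomial (Fin 2) ℂ) := (MvPolynomial.pderiv 0).toLinearMap

open MvPolynomial in
/-- `∂_ξ` on complex polynomials in two variables, as an endomorphism. -/
def pdXi : Module.End ℂ (MvPolynomial (Fin 2) ℂ) := (MvPolynomial.pderiv 1).toLinearMap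

/-- The Laplacian `Δ = ∂ₓ² + ∂_ξ²` on complex polynomials in two variables. -/
def pLap : Module.End ℂ (MvPolynomial (Fin 2) ℂ) := pdX ^ 2 + pdXi ^ 2

/-- The Weyl-Wick transform
`W[a] = Σ_{n≥0} ((-1)^n/(4^n n!)) Δ^n Σ_{l≥0} ((-i)^l/(2^l l!)) ∂ₓ^l ∂_ξ^l a`
(all sums are finite on polynomials). -/
def weylWick (a : MvPolynomial (Fin 2) ℂ) : MvPolynomial (Fin 2) ℂ :=
  ∑ n ∈ Finset.range (a.totalDegree + 1), (((-1 : ℂ) ^ n / (4 ^ n * n.factorial)) •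
    (pLap ^ n) (∑ l ∈ Finset.range (a.totalDegree + 1),
      (((-Complex.I) ^ l / (2 ^ l * l.factorial)) • (pdX ^ l) ((pdXi ^ l) a))))

/-- The inverse Weyl-Wick transform
`W⁻¹[a] = Σ_{l≥0} (i^l/(2^l l!)) ∂ₓ^l ∂_ξ^l Σ_{n≥0} (1/(4^n n!)) Δ^n a`. -/
def weylWickInv (a : MvPolynomial (Fin 2) ℂ) : MvPolynomial (Fin 2) ℂ :=
  ∑ l ∈ Finset.range (a.totalDegree + 1), ((Complex.I ^ l / (2 ^ l * l.factorial)) •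
    (pdX ^ l) ((pdXi ^ l) (∑ n ∈ Finset.range (a.totalDegree + 1),
      ((1 / (4 ^ n * n.factorial) : ℂ) • (pLap ^ n) a))))

/-- Evaluation of a complex polynomial in two variables at a point of `ℝ²`. -/
def evalP (a : MvPolynomial (Fin 2) ℂ) (v : ℝ × ℝ) : ℂ :=
  MvPolynomial.eval ![(v.1 : ℂ), (v.2 : ℂ)] a

/-- The polynomial `Σ_{j+k≤m} c_{jk} x^j ξ^k`. -/
def polyOf (m : ℕ) (c : ℕ → ℕ → ℂ) : MvPolynomial (Fin 2) ℂ :=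
  ∑ jk ∈ (Finset.range (m + 1) ×ˢ Finset.range (m + 1)).filter (fun jk => jk.1 + jk.2 ≤ m),
    MvPolynomial.C (c jk.1 jk.2) * MvPolynomial.X 0 ^ jk.1 * MvPolynomial.X 1 ^ jk.2

/-- The coherent state `Φ_{y,η}(x) = π^{-1/4} e^{ixη} e^{-(y-x)²/2}`. -/
def coherent (y η : ℝ) : ℝ → ℂ :=
  fun t => ((Real.pi ^ (-(1/4 : ℝ)) : ℝ) : ℂ) * Complex.exp (Complex.I * t * η) *
    ((Real.exp (-((y - t) ^ 2) / 2) : ℝ) : ℂ)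

/-- The operator `M₁ - q D₂` acting on functions on `ℝ²`. -/
def cE1 (q : ℝ) (f : ℝ × ℝ → ℂ) : ℝ × ℝ → ℂ := fun v => (v.1 : ℂ) * f v - (q : ℂ) * cD2 f v

/-- The operator `M₂ + p D₁` acting on functions on `ℝ²`. -/
def cE2 (p : ℝ) (f : ℝ × ℝ → ℂ) : ℝ × ℝ → ℂ := fun v => (v.2 : ℂ) * f v + (p : ℂ) * cD1 f v

/-- The operator `B = Σ_{j+k≤m} c_{jk} (M₁ - qD₂)^j (M₂ + pD₁)^k` acting on functions
on `ℝ²`. -/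
def opBfun (p q : ℝ) (m : ℕ) (c : ℕ → ℕ → ℂ) (f : ℝ × ℝ → ℂ) : ℝ × ℝ → ℂ :=
  fun v => ∑ jk ∈ idxSet m, c jk.1 jk.2 * ((cE1 q)^[jk.1] ((cE2 p)^[jk.2] f)) v

/-- The operator `(A₁ w)(s,t) = Σ_{j+k≤m} c_{jk} s^j (D_s^k w)(s,t)` acting in the first
variable on functions on `ℝ²`. -/
def opA1fun (m : ℕ) (c : ℕ → ℕ → ℂ) (w : ℝ × ℝ → ℂ) : ℝ × ℝ → ℂ :=
  fun v => ∑ jk ∈ idxSet m, c jk.1 jk.2 * (v.1 : ℂ) ^ jk.1 * (cD1^[jk.2] w) v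

/-- The operator `(A u)(x) = Σ_{j+k≤m} c_{jk} x^j (D^k u)(x)` acting on functions on `ℝ`. -/
def opAfun (m : ℕ) (c : ℕ → ℕ → ℂ) (u : ℝ → ℂ) : ℝ → ℂ :=
  fun x => ∑ jk ∈ idxSet m, c jk.1 jk.2 * (x : ℂ) ^ jk.1 * (cD^[jk.2] u) x




-- ===== auxiliary lemmas for statement16 =====

variable {F : Type*} [NormedAddCommGroup F] [NormedSpace ℝ F]

lemma schwartz_decay_sub (f : 𝓢(ℝ × ℝ, F)) :
    ∃ C : ℝ, 0 ≤ C ∧ ∀ u : ℝ × ℝ, (1 + (u.1 - u.2) ^ 2) ^ 2 * ‖f u‖ ≤ C := by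
  obtain ⟨C0, -, h0⟩ := f.decay 0 0
  obtain ⟨C2, -, h2⟩ := f.decay 2 0
  obtain ⟨C4, -, h4⟩ := f.decay 4 0
  have hnn : ∀ u : ℝ × ℝ, 0 ≤ ‖f u‖ := fun u => norm_nonneg _
  refine ⟨|C0| + 8 * |C2| + 16 * |C4|, by positivity, fun u => ?_⟩
  have h0u := h0 u; have h2u := h2 u; have h4u := h4 u
  simp only [norm_iteratedFDeriv_zero, pow_zero, one_mul] at h0u h2u h4u
  have hs : |u.1 - u.2| ≤ 2 * ‖u‖ := by
    calc |u.1 - u.2| ≤ |u.1| + |u.2| := abs_sub _ _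
    _ ≤ ‖u‖ + ‖u‖ := add_le_add (norm_fst_le u) (norm_snd_le u)
    _ = 2 * ‖u‖ := by ring
  have hs2 : (u.1 - u.2) ^ 2 ≤ 4 * ‖u‖ ^ 2 := by nlinarith [abs_nonneg (u.1 - u.2), norm_nonneg u, _root_.sq_abs (u.1 - u.2)]
  have h04 : (u.1 - u.2) ^ 4 ≤ 16 * ‖u‖ ^ 4 := by nlinarith [sq_nonneg ((u.1-u.2)^2), norm_nonneg u, sq_nonneg (‖u‖^2)]
  nlinarith [hnn u, le_abs_self C0, le_abs_self C2, le_abs_self C4, norm_nonneg u,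
    mul_le_mul_of_nonneg_right hs2 (hnn u), mul_le_mul_of_nonneg_right h04 (hnn u)]

omit [NormedSpace ℝ F] in
lemma integrable_of_decay {g : ℝ → F} (hg : Continuous g) (C : ℝ)
    (h : ∀ z : ℝ, ‖g z‖ ≤ C * (1 + z ^ 2)⁻¹) : Integrable g := by
  refine (integrable_inv_one_add_sq.const_mul C).mono' hg.aestronglyMeasurable ?_
  filter_upwards with z
  exact h z

/-- point on the line used in the Wigner transform. -/
def ptm (p x z : ℝ) : ℝ × ℝ := (x + (1 - p) * z, x - p * z)

lemma ptm_sub (p x z : ℝ) : (ptm p x z).1 - (ptm p x z).2 = z := by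
  simp only [ptm]; ring

lemma schwartz_ptm_bound (p : ℝ) (f : 𝓢(ℝ × ℝ, F)) :
    ∃ C : ℝ, 0 ≤ C ∧ ∀ x z : ℝ, (1 + z ^ 2) ^ 2 * ‖f (ptm p x z)‖ ≤ C := by
  obtain ⟨C, hC0, hC⟩ := schwartz_decay_sub f
  refine ⟨C, hC0, fun x z => ?_⟩
  have := hC (ptm p x z)
  rwa [ptm_sub] at this

lemma ptm_bound_aux {C r z : ℝ} (hr : 0 ≤ r) (h : (1 + z ^ 2) ^ 2 * r ≤ C) :
    r ≤ C * (1 + z ^ 2)⁻¹ := by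
  have h1 : (0:ℝ) < 1 + z ^ 2 := by positivity
  rw [mul_comm, inv_mul_eq_div, le_div_iff₀ h1]
  have key : (1 + z ^ 2) * r ≤ (1 + z ^ 2) ^ 2 * r :=
    mul_le_mul_of_nonneg_right (by nlinarith [sq_nonneg z]) hr
  linarith

lemma ptm_bound_aux_z {C r z : ℝ} (hr : 0 ≤ r) (h : (1 + z ^ 2) ^ 2 * r ≤ C) :
    |z| * r ≤ C * (1 + z ^ 2)⁻¹ := by
  have h1 : (0:ℝ) < 1 + z ^ 2 := by positivity
  rw [mul_comm C, inv_mul_eq_div, le_div_iff₀ h1]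
  have hz : |z| ≤ 1 + z ^ 2 := by nlinarith [abs_nonneg z, _root_.sq_abs z]
  nlinarith [mul_le_mul_of_nonneg_right hz hr, sq_nonneg z]

lemma norm_exp_kernel (z y : ℝ) : ‖Complex.exp (-(Complex.I * z * y))‖ = 1 := by
  rw [show -(Complex.I * (z:ℂ) * (y:ℂ)) = ((-(z * y) : ℝ) : ℂ) * Complex.I by push_cast; ring]
  exact Complex.norm_exp_ofReal_mul_I _

lemma continuous_ptm (p x : ℝ) : Continuous fun z : ℝ => ptm p x z := by
  unfold ptm; fun_prop

lemma continuous_expker (y : ℝ) : Continuous fun z : ℝ => Complex.exp (-(Complex.I * z * y)) := by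
  fun_prop

lemma integrable_kernel (p x y : ℝ) (f : 𝓢(ℝ × ℝ, ℂ)) :
    Integrable fun z : ℝ => Complex.exp (-(Complex.I * z * y)) * f (ptm p x z) := by
  obtain ⟨C, hC0, hC⟩ := schwartz_ptm_bound p f
  refine integrable_of_decay ((continuous_expker y).mul (f.continuous.comp (continuous_ptm p x))) C (fun z => ?_)
  rw [norm_mul, norm_exp_kernel, one_mul]
  exact ptm_bound_aux (norm_nonneg _) (hC x z)

lemma integrable_ptm (p x : ℝ) (f : 𝓢(ℝ × ℝ, F)) :
    Integrable fun z : ℝ => f (ptm p x z) := by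
  obtain ⟨C, hC0, hC⟩ := schwartz_ptm_bound p f
  exact integrable_of_decay (f.continuous.comp (continuous_ptm p x)) C
    (fun z => ptm_bound_aux (norm_nonneg _) (hC x z))

/-- `h ↦ (h.1, h.1)`. -/
def dCLM : ℝ × ℝ →L[ℝ] ℝ × ℝ :=
  (ContinuousLinearMap.fst ℝ ℝ ℝ).prod (ContinuousLinearMap.fst ℝ ℝ ℝ)

/-- `h ↦ (h.2 : ℂ)`. -/
def eCLM : ℝ × ℝ →L[ℝ] ℂ := Complex.ofRealCLM.comp (ContinuousLinearMap.snd ℝ ℝ ℝ)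

lemma dCLM_apply (h : ℝ × ℝ) : dCLM h = (h.1, h.1) := rfl
lemma eCLM_apply (h : ℝ × ℝ) : eCLM h = (h.2 : ℂ) := rfl

lemma norm_dCLM_le : ‖dCLM‖ ≤ 1 := by
  refine ContinuousLinearMap.opNorm_le_bound _ zero_le_one (fun h => ?_)
  rw [dCLM_apply, one_mul]
  rw [Prod.norm_def]
  simpa using norm_fst_le h

lemma norm_eCLM_le : ‖eCLM‖ ≤ 1 := by
  refine ContinuousLinearMap.opNorm_le_bound _ zero_le_one (fun h => ?_)
  rw [eCLM_apply, one_mul, Complex.norm_real]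
  exact norm_snd_le h

/-- Full derivative (in `v`) of the Wigner integrand. -/
def wigF' (p : ℝ) (w : 𝓢(ℝ × ℝ, ℂ)) (v : ℝ × ℝ) (z : ℝ) : ℝ × ℝ →L[ℝ] ℂ :=
  Complex.exp (-(Complex.I * z * v.2)) •
    ((-(Complex.I * z) * w (ptm p v.1 z)) • eCLM + (fderiv ℝ w (ptm p v.1 z)).comp dCLM)

lemma hasFDerivAt_integrand (p : ℝ) (w : 𝓢(ℝ × ℝ, ℂ)) (z : ℝ) (v : ℝ × ℝ) :
    HasFDerivAt (fun u : ℝ × ℝ => Complex.exp (-(Complex.I * z * u.2)) * w (ptm p u.1 z))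
      (wigF' p w v z) v := by
  have h1 : HasFDerivAt (fun u : ℝ × ℝ => -(Complex.I * z * (u.2 : ℂ)))
      ((-(Complex.I * z)) • eCLM) v := by
    have heq : (fun u : ℝ × ℝ => -(Complex.I * z * (u.2 : ℂ)))
        = fun u => ((-(Complex.I * z)) • eCLM) u := by
      funext u
      simp only [ContinuousLinearMap.smul_apply, eCLM_apply, smul_eq_mul]
      ring
    rw [heq]
    exact ((-(Complex.I * (z:ℂ))) • eCLM).hasFDerivAt
  have he : HasFDerivAt (fun u : ℝ × ℝ => Complex.exp (-(Complex.I * z * u.2)))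
      (Complex.exp (-(Complex.I * z * v.2)) • ((-(Complex.I * z)) • eCLM)) v := h1.cexp
  have hA : HasFDerivAt (fun u : ℝ × ℝ => ptm p u.1 z) dCLM v := by
    have heq : (fun u : ℝ × ℝ => ptm p u.1 z) = fun u => dCLM u + ((1 - p) * z, -(p * z)) := by
      funext u
      simp only [ptm, dCLM_apply, Prod.mk_add_mk, Prod.mk.injEq]
      exact ⟨trivial, by ring⟩
    rw [heq]
    exact dCLM.hasFDerivAt.add_const _
  have hw : HasFDerivAt (fun u : ℝ × ℝ => w (ptm p u.1 z))
      ((fderiv ℝ w (ptm p v.1 z)).comp dCLM) v :=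
    (w.differentiableAt.hasFDerivAt).comp v hA
  have hprod := he.mul hw
  have heq : wigF' p w v z =
      Complex.exp (-(Complex.I * z * v.2)) • (fderiv ℝ w (ptm p v.1 z)).comp dCLM +
        w (ptm p v.1 z) • Complex.exp (-(Complex.I * z * v.2)) • ((-(Complex.I * z)) • eCLM) := by
    refine ContinuousLinearMap.ext fun h => ?_
    simp only [wigF', ContinuousLinearMap.add_apply, ContinuousLinearMap.smul_apply,
      ContinuousLinearMap.coe_comp', Function.comp_apply, eCLM_apply, smul_eq_mul]
    ring
  rw [heq]
  exact hprod

lemma continuous_wigF' (p : ℝ) (w : 𝓢(ℝ × ℝ, ℂ)) (v : ℝ × ℝ) :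
    Continuous (wigF' p w v) := by
  unfold wigF'
  refine Continuous.smul (continuous_expker v.2) (Continuous.add ?_ ?_)
  · refine Continuous.smul (f := fun z : ℝ => -(Complex.I * z) * w (ptm p v.1 z)) ?_ continuous_const
    exact (continuous_const.mul Complex.continuous_ofReal).neg.mul
      (w.continuous.comp (continuous_ptm p v.1))
  · have hfd : Continuous fun z : ℝ => fderiv ℝ w (ptm p v.1 z) := by
      have : Continuous fun u : ℝ × ℝ => fderiv ℝ w u := by
        have := (SchwartzMap.fderivCLM ℝ (ℝ × ℝ) ℂ w).continuous
        exact this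
      exact this.comp (continuous_ptm p v.1)
    exact hfd.clm_comp continuous_const

set_option maxHeartbeats 1000000 in
lemma norm_wigF'_le (p : ℝ) (w : 𝓢(ℝ × ℝ, ℂ)) {Cw Cf : ℝ}
    (hCw : ∀ x z : ℝ, (1 + z ^ 2) ^ 2 * ‖w (ptm p x z)‖ ≤ Cw)
    (hCf : ∀ x z : ℝ, (1 + z ^ 2) ^ 2 * ‖fderiv ℝ w (ptm p x z)‖ ≤ Cf)
    (u : ℝ × ℝ) (z : ℝ) :
    ‖wigF' p w u z‖ ≤ (Cw + Cf) * (1 + z ^ 2)⁻¹ := by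
  unfold wigF'
  set pt := ptm p u.1 z with hpt
  set c : ℂ := -(Complex.I * z) * w pt with hc
  have h1 : ‖c • eCLM‖ ≤ |z| * ‖w pt‖ := by
    refine le_trans (norm_smul_le c eCLM) ?_
    have : ‖c‖ = |z| * ‖w pt‖ := by
      rw [hc, norm_mul, norm_neg, norm_mul, Complex.norm_I, one_mul,
        Complex.norm_real, Real.norm_eq_abs]
    rw [this]
    calc |z| * ‖w pt‖ * ‖eCLM‖ ≤ |z| * ‖w pt‖ * 1 :=
      mul_le_mul_of_nonneg_left norm_eCLM_le (by positivity)
    _ = |z| * ‖w pt‖ := mul_one _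
  have h2 : ‖(fderiv ℝ w pt).comp dCLM‖ ≤ ‖fderiv ℝ w pt‖ := by
    calc ‖(fderiv ℝ w pt).comp dCLM‖ ≤ ‖fderiv ℝ w pt‖ * ‖dCLM‖ :=
      ContinuousLinearMap.opNorm_comp_le _ _
    _ ≤ ‖fderiv ℝ w pt‖ * 1 := mul_le_mul_of_nonneg_left norm_dCLM_le (norm_nonneg _)
    _ = _ := mul_one _
  have h3 : |z| * ‖w pt‖ ≤ Cw * (1 + z ^ 2)⁻¹ :=
    ptm_bound_aux_z (norm_nonneg _) (hCw u.1 z)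
  have h4 : ‖fderiv ℝ w pt‖ ≤ Cf * (1 + z ^ 2)⁻¹ :=
    ptm_bound_aux (norm_nonneg _) (hCf u.1 z)
  calc ‖Complex.exp (-(Complex.I * z * u.2)) • (c • eCLM + (fderiv ℝ w pt).comp dCLM)‖
      ≤ ‖Complex.exp (-(Complex.I * z * u.2))‖ * ‖c • eCLM + (fderiv ℝ w pt).comp dCLM‖ :=
        norm_smul_le (Complex.exp (-(Complex.I * z * u.2))) (c • eCLM + (fderiv ℝ w pt).comp dCLM)
  _ = ‖c • eCLM + (fderiv ℝ w pt).comp dCLM‖ := by rw [norm_exp_kernel, one_mul]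
  _ ≤ ‖c • eCLM‖ + ‖(fderiv ℝ w pt).comp dCLM‖ := norm_add_le _ _
  _ ≤ Cw * (1 + z ^ 2)⁻¹ + Cf * (1 + z ^ 2)⁻¹ := by
      have := h1.trans h3; have := h2.trans h4; linarith
  _ = (Cw + Cf) * (1 + z ^ 2)⁻¹ := by ring

lemma integrable_wigF' (p : ℝ) (w : 𝓢(ℝ × ℝ, ℂ)) (v : ℝ × ℝ) :
    Integrable (wigF' p w v) := by
  obtain ⟨Cw, -, hCw⟩ := schwartz_ptm_bound p w
  obtain ⟨Cf, -, hCf⟩ := schwartz_ptm_bound p (SchwartzMap.fderivCLM ℝ (ℝ × ℝ) ℂ w)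
  simp only [SchwartzMap.fderivCLM_apply] at hCf
  exact integrable_of_decay (continuous_wigF' p w v) (Cw + Cf)
    (fun z => norm_wigF'_le p w hCw hCf v z)

lemma hasFDerivAt_wigInt (p : ℝ) (w : 𝓢(ℝ × ℝ, ℂ)) (v : ℝ × ℝ) :
    HasFDerivAt
      (fun u : ℝ × ℝ => ∫ z : ℝ, Complex.exp (-(Complex.I * z * u.2)) * w (ptm p u.1 z))
      (∫ z : ℝ, wigF' p w v z) v := by
  obtain ⟨Cw, -, hCw⟩ := schwartz_ptm_bound p w
  obtain ⟨Cf, -, hCf⟩ := schwartz_ptm_bound p (SchwartzMap.fderivCLM ℝ (ℝ × ℝ) ℂ w)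
  simp only [SchwartzMap.fderivCLM_apply] at hCf
  refine hasFDerivAt_integral_of_dominated_of_fderiv_le (F := fun (u : ℝ × ℝ) (z : ℝ) =>
      Complex.exp (-(Complex.I * z * u.2)) * w (ptm p u.1 z))
      (F' := fun u z => wigF' p w u z) (bound := fun z => (Cw + Cf) * (1 + z ^ 2)⁻¹)
      (s := Metric.ball v 1) (Metric.ball_mem_nhds v one_pos) ?_ ?_ ?_ ?_ ?_ ?_
  · filter_upwards with u
    exact ((continuous_expker u.2).mul (w.continuous.comp (continuous_ptm p u.1))).aestronglyMeasurable
  · exact integrable_kernel p v.1 v.2 w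
  · exact (continuous_wigF' p w v).aestronglyMeasurable
  · filter_upwards with z u _
    exact norm_wigF'_le p w hCw hCf u z
  · exact integrable_inv_one_add_sq.const_mul _
  · filter_upwards with z u _
    exact hasFDerivAt_integrand p w z u


/-- The normalization constant of the Wigner transform. -/
def wigC : ℂ := (((2 * Real.pi) ^ (-(1/2 : ℝ)) : ℝ) : ℂ)

lemma wig_apply (p : ℝ) (f : ℝ × ℝ → ℂ) (v : ℝ × ℝ) :
    Wig p f v = wigC * ∫ z : ℝ, Complex.exp (-(Complex.I * z * v.2)) * f (ptm p v.1 z) := rfl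

lemma hasFDerivAt_wig (p : ℝ) (w : 𝓢(ℝ × ℝ, ℂ)) (v : ℝ × ℝ) :
    HasFDerivAt (Wig p ⇑w) (wigC • ∫ z : ℝ, wigF' p w v z) v :=
  (hasFDerivAt_wigInt p w v).const_mul wigC

lemma wigF'_apply_e1 (p : ℝ) (w : 𝓢(ℝ × ℝ, ℂ)) (v : ℝ × ℝ) (z : ℝ) :
    wigF' p w v z ((1, 0) : ℝ × ℝ) =
      Complex.exp (-(Complex.I * z * v.2)) * fderiv ℝ w (ptm p v.1 z) ((1, 1) : ℝ × ℝ) := by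
  simp [wigF', dCLM, eCLM, smul_eq_mul]

lemma wigF'_apply_e2 (p : ℝ) (w : 𝓢(ℝ × ℝ, ℂ)) (v : ℝ × ℝ) (z : ℝ) :
    wigF' p w v z ((0, 1) : ℝ × ℝ) =
      Complex.exp (-(Complex.I * z * v.2)) * (-(Complex.I * z) * w (ptm p v.1 z)) := by
  have h0 : dCLM ((0, 1) : ℝ × ℝ) = (0, 0) := rfl
  simp [wigF', h0, dCLM, eCLM, smul_eq_mul, Prod.mk_zero_zero]

lemma cD1_wig (p : ℝ) (w : 𝓢(ℝ × ℝ, ℂ)) (v : ℝ × ℝ) :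
    cD1 (Wig p ⇑w) v = -Complex.I *
      (wigC * ∫ z : ℝ, Complex.exp (-(Complex.I * z * v.2)) *
        fderiv ℝ w (ptm p v.1 z) ((1, 1) : ℝ × ℝ)) := by
  unfold cD1
  rw [(hasFDerivAt_wig p w v).fderiv, ContinuousLinearMap.smul_apply,
    ContinuousLinearMap.integral_apply (integrable_wigF' p w v)]
  congr 1
  rw [smul_eq_mul]
  congr 1
  exact integral_congr_ae (Filter.Eventually.of_forall (fun z => wigF'_apply_e1 p w v z))

lemma cD2_wig (p : ℝ) (w : 𝓢(ℝ × ℝ, ℂ)) (v : ℝ × ℝ) :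
    cD2 (Wig p ⇑w) v = -Complex.I *
      (wigC * ∫ z : ℝ, Complex.exp (-(Complex.I * z * v.2)) *
        (-(Complex.I * z) * w (ptm p v.1 z))) := by
  unfold cD2
  rw [(hasFDerivAt_wig p w v).fderiv, ContinuousLinearMap.smul_apply,
    ContinuousLinearMap.integral_apply (integrable_wigF' p w v)]
  congr 1
  rw [smul_eq_mul]
  congr 1
  exact integral_congr_ae (Filter.Eventually.of_forall (fun z => wigF'_apply_e2 p w v z))


/-- `∂₁` as a Schwartz-space operator. -/
def P1op (w : 𝓢(ℝ × ℝ, ℂ)) : 𝓢(ℝ × ℝ, ℂ) := LineDeriv.lineDerivOpCLM ℝ 𝓢(ℝ × ℝ, ℂ) ((1, 0) : ℝ × ℝ) w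

/-- `∂₂` as a Schwartz-space operator. -/
def P2op (w : 𝓢(ℝ × ℝ, ℂ)) : 𝓢(ℝ × ℝ, ℂ) := LineDeriv.lineDerivOpCLM ℝ 𝓢(ℝ × ℝ, ℂ) ((0, 1) : ℝ × ℝ) w

lemma P1op_apply (w : 𝓢(ℝ × ℝ, ℂ)) (u : ℝ × ℝ) :
    P1op w u = fderiv ℝ w u ((1, 0) : ℝ × ℝ) := rfl

lemma P2op_apply (w : 𝓢(ℝ × ℝ, ℂ)) (u : ℝ × ℝ) :
    P2op w u = fderiv ℝ w u ((0, 1) : ℝ × ℝ) := rfl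

lemma fourier_to_kernel (f : ℝ → ℂ) (y : ℝ) :
    FourierTransform.fourier f (y / (2 * Real.pi)) =
      ∫ z : ℝ, Complex.exp (-(Complex.I * z * y)) * f z := by
  rw [Real.fourier_real_eq_integral_exp_smul]
  refine integral_congr_ae (Filter.Eventually.of_forall fun z => ?_)
  simp only [smul_eq_mul]
  congr 1
  have hπ : (2 : ℝ) * Real.pi ≠ 0 := by positivity
  rw [show (-2 * Real.pi * z * (y / (2 * Real.pi)) : ℝ) = -(z * y) by field_simp]
  push_cast
  ring

lemma ibp_wig (p x y : ℝ) (w : 𝓢(ℝ × ℝ, ℂ)) :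
    ∫ z : ℝ, Complex.exp (-(Complex.I * z * y)) * fderiv ℝ w (ptm p x z) ((1 - p, -p) : ℝ × ℝ)
      = Complex.I * y * ∫ z : ℝ, Complex.exp (-(Complex.I * z * y)) * w (ptm p x z) := by
  set h : ℝ → ℂ := fun z => w (ptm p x z) with hh
  have hder : ∀ z : ℝ, HasDerivAt h (fderiv ℝ w (ptm p x z) ((1 - p, -p) : ℝ × ℝ)) z := by
    intro z
    have hA : HasDerivAt (fun z : ℝ => ptm p x z) ((1 - p, -p) : ℝ × ℝ) z := by
      have h1 : HasDerivAt (fun z : ℝ => x + (1 - p) * z) (1 - p) z :=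
        (((hasDerivAt_id z).const_mul (1 - p)).const_add x).congr_deriv (mul_one _)
      have h2 : HasDerivAt (fun z : ℝ => x - p * z) (-p) z := by
        have := (((hasDerivAt_id z).const_mul p).const_sub x).congr_deriv
          (by rw [mul_one] : -(p * 1) = -p)
        exact this
      exact h1.prodMk h2
    exact (w.differentiableAt.hasFDerivAt).comp_hasDerivAt z hA
  have hdiff : Differentiable ℝ h := fun z => (hder z).differentiableAt
  have hderiv_eq : deriv h = fun z =>
      ((1 - p) • P1op w - p • P2op w : 𝓢(ℝ × ℝ, ℂ)) (ptm p x z) := by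
    funext z
    rw [(hder z).deriv]
    have : ((1 - p, -p) : ℝ × ℝ) = (1 - p) • ((1, 0) : ℝ × ℝ) + (-p) • ((0, 1) : ℝ × ℝ) := by
      simp [Prod.ext_iff]
    rw [this, map_add, (fderiv ℝ w (ptm p x z)).map_smul, (fderiv ℝ w (ptm p x z)).map_smul]
    simp only [SchwartzMap.sub_apply, SchwartzMap.smul_apply, P1op_apply, P2op_apply,
      smul_eq_mul, Complex.real_smul]
    push_cast
    ring
  have hInt : Integrable h := integrable_ptm p x w
  have hInt' : Integrable (deriv h) := by
    rw [hderiv_eq]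
    exact integrable_ptm p x _
  have key := congrFun (Real.fourier_deriv hInt hdiff hInt') (y / (2 * Real.pi))
  rw [fourier_to_kernel, fourier_to_kernel] at key
  have hsc : (2 * (Real.pi : ℂ) * Complex.I * ((y / (2 * Real.pi) : ℝ) : ℂ)) = Complex.I * y := by
    have hπ : (Real.pi : ℂ) ≠ 0 := by exact_mod_cast Real.pi_ne_zero
    push_cast
    field_simp
  rw [smul_eq_mul, hsc] at key
  calc ∫ z : ℝ, Complex.exp (-(Complex.I * z * y)) *
        fderiv ℝ w (ptm p x z) ((1 - p, -p) : ℝ × ℝ)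
      = ∫ z : ℝ, Complex.exp (-(Complex.I * z * y)) * deriv h z := by
        refine integral_congr_ae (Filter.Eventually.of_forall fun z => ?_)
        simp only [(hder z).deriv]
  _ = Complex.I * y * ∫ z : ℝ, Complex.exp (-(Complex.I * z * y)) * h z := key
  _ = _ := rfl


/-- Multiplication by the first coordinate as a Schwartz-space operator. -/
def MSop (w : 𝓢(ℝ × ℝ, ℂ)) : 𝓢(ℝ × ℝ, ℂ) := mulCLM hasTemperateGrowth_coord1 w

/-- Multiplication by the second coordinate as a Schwartz-space operator. -/
def M2op (w : 𝓢(ℝ × ℝ, ℂ)) : 𝓢(ℝ × ℝ, ℂ) := mulCLM hasTemperateGrowth_coord2 w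

/-- `D₁ = -i∂₁` as a Schwartz-space operator. -/
def DSop (w : 𝓢(ℝ × ℝ, ℂ)) : 𝓢(ℝ × ℝ, ℂ) :=
  (-Complex.I) • (LineDeriv.lineDerivOpCLM ℂ 𝓢(ℝ × ℝ, ℂ) ((1, 0) : ℝ × ℝ) w)

lemma MSop_apply (w : 𝓢(ℝ × ℝ, ℂ)) (u : ℝ × ℝ) : MSop w u = w u * u.1 := rfl
lemma M2op_apply (w : 𝓢(ℝ × ℝ, ℂ)) (u : ℝ × ℝ) : M2op w u = w u * u.2 := rfl

lemma DSop_apply (w : 𝓢(ℝ × ℝ, ℂ)) (u : ℝ × ℝ) :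
    DSop w u = -Complex.I * fderiv ℝ w u ((1, 0) : ℝ × ℝ) := by
  rw [DSop, SchwartzMap.smul_apply, LineDeriv.lineDerivOpCLM_apply, SchwartzMap.lineDerivOp_apply_eq_fderiv, smul_eq_mul]

lemma DSop_coe (w : 𝓢(ℝ × ℝ, ℂ)) : ⇑(DSop w) = cD1 ⇑w := by
  funext u
  rw [DSop_apply, cD1]

lemma keyM (p : ℝ) (w : 𝓢(ℝ × ℝ, ℂ)) :
    cE1 (1 - p) (Wig p ⇑w) = Wig p ⇑(MSop w) := by
  funext v
  set s : 𝓢(ℝ × ℝ, ℂ) := MSop w - M2op w with hs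
  have hs_apply : ∀ z : ℝ, s (ptm p v.1 z) = w (ptm p v.1 z) * (z : ℂ) := by
    intro z
    rw [hs, SchwartzMap.sub_apply, MSop_apply, M2op_apply, ← mul_sub]
    congr 1
    rw [show ((ptm p v.1 z).1 : ℂ) - ((ptm p v.1 z).2 : ℂ) = (((ptm p v.1 z).1 - (ptm p v.1 z).2 : ℝ) : ℂ) by push_cast; ring, ptm_sub]
  set e : ℝ → ℂ := fun z => Complex.exp (-(Complex.I * z * v.2)) with he
  set J0 : ℂ := ∫ z : ℝ, e z * w (ptm p v.1 z) with hJ0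
  set Jz : ℂ := ∫ z : ℝ, e z * s (ptm p v.1 z) with hJz
  have h1 : (∫ z : ℝ, e z * (-(Complex.I * z) * w (ptm p v.1 z))) = -Complex.I * Jz := by
    rw [hJz, ← MeasureTheory.integral_const_mul]
    refine integral_congr_ae (Filter.Eventually.of_forall fun z => ?_)
    simp only [hs_apply z]
    ring
  have h2 : (∫ z : ℝ, e z * (MSop w) (ptm p v.1 z)) = (v.1 : ℂ) * J0 + ((1 : ℂ) - p) * Jz := by
    have hptw : ∀ z : ℝ, e z * (MSop w) (ptm p v.1 z) =
        (v.1 : ℂ) * (e z * w (ptm p v.1 z)) + ((1 : ℂ) - p) * (e z * s (ptm p v.1 z)) := by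
      intro z
      rw [MSop_apply, hs_apply z]
      have : ((ptm p v.1 z).1 : ℂ) = (v.1 : ℂ) + ((1 : ℂ) - p) * z := by
        rw [show (ptm p v.1 z).1 = v.1 + (1 - p) * z from rfl]
        push_cast; ring
      rw [this]
      ring
    rw [MeasureTheory.integral_congr_ae (Filter.Eventually.of_forall hptw),
      MeasureTheory.integral_add (((integrable_kernel p v.1 v.2 w).const_mul _))
        ((integrable_kernel p v.1 v.2 s).const_mul _),
      MeasureTheory.integral_const_mul, MeasureTheory.integral_const_mul]
  simp only [cE1]
  rw [cD2_wig p w v, wig_apply, wig_apply, h2, h1]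
  rw [← hJ0]
  push_cast
  linear_combination (-(1 - (p:ℂ))) * wigC * Jz * Complex.I_mul_I

lemma keyD (p : ℝ) (w : 𝓢(ℝ × ℝ, ℂ)) :
    cE2 p (Wig p ⇑w) = Wig p ⇑(DSop w) := by
  funext v
  set e : ℝ → ℂ := fun z => Complex.exp (-(Complex.I * z * v.2)) with he
  set J0 : ℂ := ∫ z : ℝ, e z * w (ptm p v.1 z) with hJ0
  set J1 : ℂ := ∫ z : ℝ, e z * (P1op w) (ptm p v.1 z) with hJ1
  set J2 : ℂ := ∫ z : ℝ, e z * (P2op w) (ptm p v.1 z) with hJ2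
  have hIBP : ((1 : ℂ) - p) * J1 - (p : ℂ) * J2 = Complex.I * v.2 * J0 := by
    have h0 := ibp_wig p v.1 v.2 w
    have hdecomp : ∀ z : ℝ, e z * fderiv ℝ w (ptm p v.1 z) ((1 - p, -p) : ℝ × ℝ) =
        ((1 : ℂ) - p) * (e z * (P1op w) (ptm p v.1 z)) + (-(p : ℂ)) * (e z * (P2op w) (ptm p v.1 z)) := by
      intro z
      have hv : ((1 - p, -p) : ℝ × ℝ) = (1 - p) • ((1, 0) : ℝ × ℝ) + (-p) • ((0, 1) : ℝ × ℝ) := by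
        simp [Prod.ext_iff]
      rw [hv, map_add, (fderiv ℝ w (ptm p v.1 z)).map_smul, (fderiv ℝ w (ptm p v.1 z)).map_smul,
        P1op_apply, P2op_apply]
      simp only [Complex.real_smul]
      push_cast
      ring
    rw [MeasureTheory.integral_congr_ae (Filter.Eventually.of_forall hdecomp),
      MeasureTheory.integral_add (((integrable_kernel p v.1 v.2 (P1op w)).const_mul _))
        ((integrable_kernel p v.1 v.2 (P2op w)).const_mul _),
      MeasureTheory.integral_const_mul, MeasureTheory.integral_const_mul] at h0
    rw [← hJ1, ← hJ2, ← hJ0] at h0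
    linear_combination h0
  have h11 : (∫ z : ℝ, e z * fderiv ℝ w (ptm p v.1 z) ((1, 1) : ℝ × ℝ)) = J1 + J2 := by
    have hdecomp : ∀ z : ℝ, e z * fderiv ℝ w (ptm p v.1 z) ((1, 1) : ℝ × ℝ) =
        e z * (P1op w) (ptm p v.1 z) + e z * (P2op w) (ptm p v.1 z) := by
      intro z
      have hv : ((1, 1) : ℝ × ℝ) = ((1, 0) : ℝ × ℝ) + ((0, 1) : ℝ × ℝ) := by
        simp [Prod.ext_iff]
      rw [hv, map_add, P1op_apply, P2op_apply, mul_add]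
    rw [MeasureTheory.integral_congr_ae (Filter.Eventually.of_forall hdecomp),
      MeasureTheory.integral_add (integrable_kernel p v.1 v.2 (P1op w))
        (integrable_kernel p v.1 v.2 (P2op w)), ← hJ1, ← hJ2]
  have hds : (∫ z : ℝ, e z * (DSop w) (ptm p v.1 z)) = -Complex.I * J1 := by
    rw [hJ1, ← MeasureTheory.integral_const_mul]
    refine integral_congr_ae (Filter.Eventually.of_forall fun z => ?_)
    simp only [DSop_apply, P1op_apply]
    ring
  simp only [cE2]
  rw [cD1_wig p w v, wig_apply, wig_apply, h11, hds, ← hJ0]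
  linear_combination (Complex.I * wigC) * hIBP + (wigC * (v.2 : ℂ) * J0) * Complex.I_mul_I


lemma MSop_iter_apply (j : ℕ) (f : 𝓢(ℝ × ℝ, ℂ)) (u : ℝ × ℝ) :
    (MSop^[j] f) u = f u * (u.1 : ℂ) ^ j := by
  induction j with
  | zero => simp
  | succ n ih =>
      rw [Function.iterate_succ_apply', MSop_apply, ih]
      ring

lemma cD1_iter_coe (k : ℕ) (f : 𝓢(ℝ × ℝ, ℂ)) : cD1^[k] ⇑f = ⇑(DSop^[k] f) := by
  induction k with
  | zero => rfl
  | succ n ih =>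
      rw [Function.iterate_succ_apply', ih, ← DSop_coe, ← Function.iterate_succ_apply' DSop n f]

lemma key_iter (p : ℝ) (j k : ℕ) (w : 𝓢(ℝ × ℝ, ℂ)) :
    (cE1 (1 - p))^[j] ((cE2 p)^[k] (Wig p ⇑w)) = Wig p ⇑(MSop^[j] (DSop^[k] w)) := by
  have hk : ∀ (k : ℕ) (u : 𝓢(ℝ × ℝ, ℂ)), (cE2 p)^[k] (Wig p ⇑u) = Wig p ⇑(DSop^[k] u) := by
    intro k
    induction k with
    | zero => intro u; rfl
    | succ n ih =>
        intro u
        rw [Function.iterate_succ_apply', ih, keyD, ← Function.iterate_succ_apply' DSop n u]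
  have hj : ∀ (j : ℕ) (u : 𝓢(ℝ × ℝ, ℂ)), (cE1 (1 - p))^[j] (Wig p ⇑u) = Wig p ⇑(MSop^[j] u) := by
    intro j
    induction j with
    | zero => intro u; rfl
    | succ n ih =>
        intro u
        rw [Function.iterate_succ_apply', ih, keyM, ← Function.iterate_succ_apply' MSop n u]
  rw [hk, hj]






/-- For `p ∈ ℝ`, `q = 1 - p`, the Wigner-like transform intertwines the
operator `A₁ = Σ_{j+k≤m} c_{jk} s^j D_s^k` acting in the first variable with
`B = Σ_{j+k≤m} c_{jk} (M₁ - qD₂)^j (M₂ + pD₁)^k`: one has `B(Wig_p[w]) = Wig_p[A₁ w]`. -/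
theorem statement16 (p q : ℝ) (hq : q = 1 - p) (m : ℕ) (c : ℕ → ℕ → ℂ) (w : 𝓢(ℝ × ℝ, ℂ)) :
    opBfun p q m c (Wig p ⇑w) = Wig p (opA1fun m c ⇑w) := by
  subst hq
  funext v
  have lhs_eq : opBfun p (1 - p) m c (Wig p ⇑w) v =
      ∑ jk ∈ idxSet m, c jk.1 jk.2 * Wig p ⇑(MSop^[jk.1] (DSop^[jk.2] w)) v := by
    unfold opBfun
    refine Finset.sum_congr rfl fun jk _ => ?_
    rw [key_iter]
  rw [lhs_eq]
  have integrand_eq : ∀ z : ℝ,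
      Complex.exp (-(Complex.I * z * v.2)) * opA1fun m c ⇑w (ptm p v.1 z) =
        ∑ jk ∈ idxSet m, c jk.1 jk.2 * (Complex.exp (-(Complex.I * z * v.2)) *
          (MSop^[jk.1] (DSop^[jk.2] w)) (ptm p v.1 z)) := by
    intro z
    unfold opA1fun
    rw [Finset.mul_sum]
    refine Finset.sum_congr rfl fun jk _ => ?_
    rw [cD1_iter_coe, MSop_iter_apply]
    ring
  rw [wig_apply, MeasureTheory.integral_congr_ae (Filter.Eventually.of_forall integrand_eq),
    MeasureTheory.integral_finset_sum _
      (fun jk _ => (integrable_kernel p v.1 v.2 _).const_mul _),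
    Finset.mul_sum]
  refine Finset.sum_congr rfl fun jk _ => ?_
  rw [wig_apply, MeasureTheory.integral_const_mul]
  ring

end
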